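/- arXiv:1302.1883 — 2 statements merged into one kernel-verified Lean document; each statement's English description precedes it below -/
import Mathlib

section
/- If a mesh pattern (π, R) has no enclosed diagonals, then (π, R) is coincident with the classical pattern π: a permutation contains (π, R) if and only if it contains π. -/
/-- `σ` contains the classical pattern `π`. -/
def PatternContains {k n : ℕ} (π : Equiv.Perm (Fin k)) (σ : Equiv.Perm (Fin n)) : Prop :=
  ∃ f : Fin k → Fin n, StrictMono f ∧ ∀ a b : Fin k, σ (f a) < σ (f b) ↔ π a < π b

/-- `σ` contains the mesh pattern `(π, R)`: some occurrence of `π` in `σ` leaves all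
regions corresponding to squares of `R` free of points of `G(σ)`.  Squares are indexed
by lower-left corner `(p.1, p.2) ∈ [0,k] × [0,k]`, with the usual boundary conventions. -/
def MeshContains {k n : ℕ} (π : Equiv.Perm (Fin k))
    (R : Set (Fin (k + 1) × Fin (k + 1))) (σ : Equiv.Perm (Fin n)) : Prop :=
  ∃ f : Fin k → Fin n, StrictMono f ∧ (∀ a b : Fin k, σ (f a) < σ (f b) ↔ π a < π b) ∧
    ∀ p ∈ R, ¬ ∃ z : Fin n,
      (∀ c : Fin k, c.val < p.1.val → f c < z) ∧
      (∀ c : Fin k, p.1.val ≤ c.val → z < f c) ∧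
      (∀ c : Fin k, (π c).val < p.2.val → σ (f c) < σ z) ∧
      (∀ c : Fin k, p.2.val ≤ (π c).val → σ z < σ (f c))

/-- `(a, b)` is a point of `G(π)` (1-indexed: `π(a) = b`). -/
def HasPoint {k : ℕ} (π : Equiv.Perm (Fin k)) (a b : ℤ) : Prop :=
  ∃ c : Fin k, (c.val : ℤ) + 1 = a ∧ ((π c).val : ℤ) + 1 = b

/-- The square with lower-left corner `(a, b)` is a shaded square of the mesh `R`. -/
def SquareInMesh {k : ℕ} (R : Set (Fin (k + 1) × Fin (k + 1))) (a b : ℤ) : Prop :=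
  ∃ q ∈ R, (q.1.val : ℤ) = a ∧ (q.2.val : ℤ) = b

/-- `((i,j), ε, h)` is an enclosed diagonal of the mesh pattern `(π, R)`. -/
def IsEnclosedDiagonal {k : ℕ} (π : Equiv.Perm (Fin k)) (R : Set (Fin (k + 1) × Fin (k + 1)))
    (i j ε : ℤ) (h : ℕ) : Prop :=
  (ε = 1 ∨ ε = -1) ∧ 1 ≤ h ∧
  (∀ x : ℕ, 1 ≤ x → x < h → HasPoint π (i + (x : ℤ)) (j + (x : ℤ) * ε)) ∧
  ¬ HasPoint π i j ∧ ¬ HasPoint π (i + (h : ℤ)) (j + (h : ℤ) * ε) ∧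
  (∀ x : ℕ, x < h → SquareInMesh R (i + (x : ℤ)) (j + (x : ℤ) * ε))

def HasEnclosedDiagonal {k : ℕ} (π : Equiv.Perm (Fin k))
    (R : Set (Fin (k + 1) × Fin (k + 1))) : Prop :=
  ∃ i j ε h, IsEnclosedDiagonal π R i j ε h

/-- The mesh `R` is superfluous for `π`: the mesh pattern `(π, R)` is coincident with
the classical pattern `π` (contained in exactly the same permutations, equivalently
avoided by exactly the same permutations). -/
def Superfluous {k : ℕ} (π : Equiv.Perm (Fin k)) (R : Set (Fin (k + 1) × Fin (k + 1))) : Prop :=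
  ∀ (n : ℕ) (σ : Equiv.Perm (Fin n)), MeshContains π R σ ↔ PatternContains π σ

/-- The number of superfluous meshes for `π`. -/
noncomputable def supMesh {k : ℕ} (π : Equiv.Perm (Fin k)) : ℕ :=
  Nat.card {R : Set (Fin (k + 1) × Fin (k + 1)) // Superfluous π R}

/-- The type of all permutations (of all sizes). -/
def Perms : Type := Σ n : ℕ, Equiv.Perm (Fin n)

def PContains (p q : Perms) : Prop := PatternContains p.2 q.2

/-- Permutations avoiding every pattern in `P`. -/
def Av (P : Set Perms) : Set Perms := {σ | ∀ p ∈ P, ¬ PContains p σ}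

/-- Permutations containing some pattern in `P`. -/
def ContSet (P : Set Perms) : Set Perms := {σ | ∃ p ∈ P, PContains p σ}

/-- Permutations (of all sizes) avoiding the mesh pattern `(π, R)`. -/
def AvMesh {k : ℕ} (π : Equiv.Perm (Fin k)) (R : Set (Fin (k + 1) × Fin (k + 1))) :
    Set Perms :=
  {σ | ¬ MeshContains π R σ.2}

def permOnNat {k : ℕ} (π : Equiv.Perm (Fin k)) (a : ℕ) : ℕ :=
  if h : a < k then (π ⟨a, h⟩).val else a

def liftVal (j w : ℕ) : ℕ := if w < j then w else w + 1

/-- (0-indexed) values of the permutation obtained from `π` by inserting the value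
`j + 1/2` between positions `i` and `i+1` (1-indexed) and rescaling. -/
def insertVal {k : ℕ} (π : Equiv.Perm (Fin k)) (i j p : ℕ) : ℕ :=
  if p < i then liftVal j (permOnNat π p)
  else if p = i then j
  else liftVal j (permOnNat π (p - 1))

/-- The boxed mesh `[1, k-1] × [1, k-1]`. -/
def boxMesh (k : ℕ) : Set (Fin (k + 1) × Fin (k + 1)) :=
  {q | 1 ≤ q.1.val ∧ q.1.val ≤ k - 1 ∧ 1 ≤ q.2.val ∧ q.2.val ≤ k - 1}

/-- The set of squares of the diagonal `((i,j), ε, h)`. -/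
def DiagSquares {k : ℕ} (i j ε : ℤ) (h : ℕ) : Set (Fin (k + 1) × Fin (k + 1)) :=
  {q | ∃ x : ℕ, x < h ∧ (q.1.val : ℤ) = i + (x : ℤ) ∧ (q.2.val : ℤ) = j + (x : ℤ) * ε}

section AuxDefs

variable {k n : ℕ}

/-- `f` is a classical occurrence of `π` in `σ`. -/
def IsOcc (π : Equiv.Perm (Fin k)) (σ : Equiv.Perm (Fin n)) (f : Fin k → Fin n) : Prop :=
  StrictMono f ∧ ∀ a b : Fin k, σ (f a) < σ (f b) ↔ π a < π b

lemma isOcc_of_parts (π : Equiv.Perm (Fin k)) (σ : Equiv.Perm (Fin n)) (f : Fin k → Fin n)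
    (h1 : StrictMono f) (h2 : ∀ u v : Fin k, π u < π v → σ (f u) < σ (f v)) :
    IsOcc π σ f := by
  refine ⟨h1, fun u v => ⟨?_, h2 u v⟩⟩
  intro h
  rcases lt_trichotomy (π u) (π v) with hlt | heq | hgt
  · exact hlt
  · have : u = v := π.injective heq
    subst this
    exact absurd h (lt_irrefl _)
  · exact absurd h (not_lt.mpr (le_of_lt (h2 v u hgt)))

lemma geom_aux (n : ℕ) : ∀ K : ℕ, (∑ r ∈ Finset.range K, (n+1)^r * n) + 1 = (n+1)^K := by
  intro K
  induction K with
  | zero => simp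
  | succ K ih =>
    rw [Finset.sum_range_succ, pow_succ]
    have h1 : (n+1)^K * (n+1) = (n+1)^K * n + (n+1)^K := by ring
    omega

open Classical in
/-- weighted potential used to pick an extremal occurrence. -/
noncomputable def psi (π : Equiv.Perm (Fin k)) (σ : Equiv.Perm (Fin n))
    (R : Set (Fin (k + 1) × Fin (k + 1))) (f : Fin k → Fin n) : ℕ :=
  ∑ c : Fin k,
    if SquareInMesh R ((c.val : ℤ) + 1) (((π c).val : ℤ) + 1)
    then (n+1)^(c.val : ℕ) * (σ (f c)).val
    else (n+1)^(k + c.val) * (n - (σ (f c)).val)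

end AuxDefs

/-- If the mesh pattern `(π, R)` has no enclosed diagonal, then it is coincident with the
classical pattern `π`: a permutation contains `(π, R)` iff it contains `π`. -/
theorem no_enclosedDiagonal_superfluous {k : ℕ} (π : Equiv.Perm (Fin k))
    (R : Set (Fin (k + 1) × Fin (k + 1))) (hnd : ¬ HasEnclosedDiagonal π R) :
    ∀ (n : ℕ) (σ : Equiv.Perm (Fin n)), MeshContains π R σ ↔ PatternContains π σ := by
  intro n σ
  constructor
  · rintro ⟨f, h1, h2, -⟩
    exact ⟨f, h1, h2⟩
  · rintro ⟨f0, hf01, hf02⟩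
    classical
    set S : Finset (Fin k → Fin n) := Finset.univ.filter (fun f => IsOcc π σ f) with hS
    have hne : S.Nonempty := ⟨f0, Finset.mem_filter.mpr ⟨Finset.mem_univ _, hf01, hf02⟩⟩
    obtain ⟨g, hgS, hgmax⟩ := Finset.exists_max_image S (psi π σ R) hne
    have hg : IsOcc π σ g := (Finset.mem_filter.mp hgS).2
    have hgm : ∀ u v : Fin k, u.val < v.val → g u < g v := fun u v h => hg.1 h
    have hgv : ∀ u v : Fin k, (π u).val < (π v).val → σ (g u) < σ (g v) :=
      fun u v h => (hg.2 u v).mpr h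
    refine ⟨g, hg.1, hg.2, ?_⟩
    rintro p hp ⟨z, hz1, hz2, hz3, hz4⟩
    set a : ℕ := p.1.val with ha
    set b : ℕ := p.2.val with hb
    have hsq_ab : SquareInMesh R (a : ℤ) (b : ℤ) := ⟨p, hp, rfl, rfl⟩
    -- the key step: build a strictly better occurrence g', contradicting maximality of g
    suffices hkey : ∃ g' : Fin k → Fin n, IsOcc π σ g' ∧ psi π σ R g < psi π σ R g' by
      obtain ⟨g', hocc', hlt'⟩ := hkey
      have : psi π σ R g' ≤ psi π σ R g :=
        hgmax g' (Finset.mem_filter.mpr ⟨Finset.mem_univ _, hocc'⟩)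
      omega
    by_cases hpt : HasPoint π (a : ℤ) (b : ℤ)
    · -- Case 1 : π has a point at the corner (a, b); move it up-right onto z.
      obtain ⟨c0, hc0a, hc0b⟩ := hpt
      refine ⟨Function.update g c0 z, ?_, ?_⟩
      · refine isOcc_of_parts π σ _ ?_ ?_
        · intro u v huv
          have huv' : u.val < v.val := huv
          by_cases hu : u = c0
          · have huv2 : c0.val < v.val := hu ▸ huv'
            have hv : v ≠ c0 := fun h => by rw [h] at huv2; exact lt_irrefl _ huv2
            rw [hu, Function.update_self, Function.update_of_ne hv]
            exact hz2 v (by omega)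
          · rw [Function.update_of_ne hu]
            by_cases hv : v = c0
            · have huv2 : u.val < c0.val := hv ▸ huv'
              rw [hv, Function.update_self]
              exact hz1 u (by omega)
            · rw [Function.update_of_ne hv]
              exact hgm u v huv'
        · intro u v hpi
          have hpi' : (π u).val < (π v).val := hpi
          by_cases hu : u = c0
          · have hpi2 : (π c0).val < (π v).val := hu ▸ hpi'
            have hv : v ≠ c0 := fun h => by rw [h] at hpi2; exact lt_irrefl _ hpi2
            rw [hu, Function.update_self, Function.update_of_ne hv]
            exact hz4 v (by omega)
          · rw [Function.update_of_ne hu]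
            by_cases hv : v = c0
            · have hpi2 : (π u).val < (π c0).val := hv ▸ hpi'
              rw [hv, Function.update_self]
              exact hz3 u (by omega)
            · rw [Function.update_of_ne hv]
              exact hgv u v hpi'
      · -- psi increases
        have hsq0 : SquareInMesh R ((c0.val : ℤ) + 1) (((π c0).val : ℤ) + 1) := by
          rw [hc0a, hc0b]; exact hsq_ab
        unfold psi
        refine Finset.sum_lt_sum (fun c _ => ?_) ⟨c0, Finset.mem_univ _, ?_⟩
        · by_cases hc : c = c0
          · have hsqc : SquareInMesh R ((c.val : ℤ) + 1) (((π c).val : ℤ) + 1) := hc ▸ hsq0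
            rw [if_pos hsqc, if_pos hsqc, hc, Function.update_self]
            have hlt : σ (g c0) < σ z := hz3 c0 (by omega)
            have h' : (σ (g c0)).val ≤ (σ z).val := le_of_lt hlt
            exact Nat.mul_le_mul le_rfl h'
          · rw [Function.update_of_ne hc]
        · rw [Function.update_self, if_pos hsq0, if_pos hsq0]
          have hlt : σ (g c0) < σ z := hz3 c0 (by omega)
          have h' : (σ (g c0)).val < (σ z).val := hlt
          exact mul_lt_mul_of_pos_left h' (pow_pos (by omega) _)
    · -- Case 2 : no point at (a, b).  Build the diagonal chain using hnd.
      have hQex : ∃ t : ℕ, ¬ SquareInMesh R ((a : ℤ) + (t : ℕ)) ((b : ℤ) + (t : ℕ)) := by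
        refine ⟨k + 1, ?_⟩
        rintro ⟨q, -, hq1, -⟩
        have := q.1.isLt
        omega
      set m : ℕ := Nat.find hQex with hmdef
      have hQm : ¬ SquareInMesh R ((a : ℤ) + (m : ℕ)) ((b : ℤ) + (m : ℕ)) := Nat.find_spec hQex
      have hQlt : ∀ t : ℕ, t < m → SquareInMesh R ((a : ℤ) + (t : ℕ)) ((b : ℤ) + (t : ℕ)) :=
        fun t ht => not_not.mp (Nat.find_min hQex ht)
      have hm1 : 1 ≤ m := by
        rcases Nat.eq_zero_or_pos m with h0 | h
        · exfalso; apply hQm; rw [h0]; push_cast; simpa using hsq_ab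
        · exact h
      have hpts : ∀ t : ℕ, 1 ≤ t → t ≤ m → HasPoint π ((a : ℤ) + (t : ℕ)) ((b : ℤ) + (t : ℕ)) := by
        intro t
        induction t using Nat.strong_induction_on with
        | _ t ih =>
          intro h1 ht
          by_contra hno
          apply hnd
          refine ⟨(a : ℤ), (b : ℤ), 1, t, Or.inl rfl, h1, ?_, hpt, ?_, ?_⟩
          · intro x hx1 hx2
            rw [mul_one]
            exact ih x hx2 hx1 (by omega)
          · rw [mul_one]
            exact hno
          · intro x hx
            rw [mul_one]
            exact hQlt x (by omega)
      obtain ⟨cm, hcm1, hcm2⟩ := hpts m hm1 le_rfl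
      have hkm : a + m ≤ k := by have := cm.isLt; omega
      have hrow : ∀ c : Fin k, a ≤ c.val → c.val < a + m → (π c).val = c.val - a + b := by
        intro c h1 h2
        obtain ⟨d, hd1, hd2⟩ := hpts (c.val - a + 1) (by omega) (by omega)
        have hdc : d = c := Fin.ext (by omega)
        subst hdc
        omega
      have hrowinv : ∀ c : Fin k, b ≤ (π c).val → (π c).val < b + m →
          a ≤ c.val ∧ c.val < a + m := by
        intro c h1 h2
        have hdlt : a + ((π c).val - b) < k := by omega
        set d : Fin k := ⟨a + ((π c).val - b), hdlt⟩ with hd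
        have hd2 := hrow d (by simp [hd]) (by simp [hd]; omega)
        have hπ : π d = π c := Fin.ext (by simp [hd] at hd2 ⊢; omega)
        have : d = c := π.injective hπ
        rw [← this]
        simp [hd]
        omega
      set g' : Fin k → Fin n := fun c =>
        if a ≤ c.val ∧ c.val < a + m then
          (if c.val = a then z else g ⟨c.val - 1, by have := c.isLt; omega⟩)
        else g c with hg'def
      have hg'A : ∀ c : Fin k, ¬(a ≤ c.val ∧ c.val < a + m) → g' c = g c := by
        intro c h
        simp only [hg'def]
        rw [if_neg h]
      have hg'B : ∀ c : Fin k, c.val = a → c.val < a + m → g' c = z := by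
        intro c h hlt
        simp only [hg'def]
        rw [if_pos ⟨by omega, hlt⟩, if_pos h]
      have hg'C : ∀ c : Fin k, a < c.val → c.val < a + m →
          ∃ w : Fin k, w.val = c.val - 1 ∧ g' c = g w := by
        intro c h1 h2
        refine ⟨⟨c.val - 1, by have := c.isLt; omega⟩, rfl, ?_⟩
        simp only [hg'def]
        rw [if_pos ⟨by omega, h2⟩, if_neg (by omega : ¬ c.val = a)]
      have hocc' : IsOcc π σ g' := by
        refine isOcc_of_parts π σ g' ?_ ?_
        · -- strict monotonicity
          intro u v huv
          have huv' : u.val < v.val := huv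
          by_cases hu : a ≤ u.val ∧ u.val < a + m
          · by_cases hvv : v.val < a + m
            · obtain ⟨w, hw, hwe⟩ := hg'C v (by omega) hvv
              rw [hwe]
              by_cases hua : u.val = a
              · rw [hg'B u hua (by omega)]
                exact hz2 w (by omega)
              · obtain ⟨w', hw', hwe'⟩ := hg'C u (by omega) hu.2
                rw [hwe']
                exact hgm w' w (by omega)
            · rw [hg'A v (by omega)]
              by_cases hua : u.val = a
              · rw [hg'B u hua (by omega)]
                exact hz2 v (by omega)
              · obtain ⟨w', hw', hwe'⟩ := hg'C u (by omega) hu.2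
                rw [hwe']
                exact hgm w' v (by omega)
          · by_cases hv : a ≤ v.val ∧ v.val < a + m
            · rw [hg'A u (by omega)]
              by_cases hva : v.val = a
              · rw [hg'B v hva (by omega)]
                exact hz1 u (by omega)
              · obtain ⟨w, hw, hwe⟩ := hg'C v (by omega) hv.2
                rw [hwe]
                exact hgm u w (by omega)
            · rw [hg'A u hu, hg'A v hv]
              exact hgm u v huv'
        · -- value comparisons
          intro u v hpi
          have hpi' : (π u).val < (π v).val := hpi
          by_cases hu : a ≤ u.val ∧ u.val < a + m
          · have hru := hrow u hu.1 hu.2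
            by_cases hv : a ≤ v.val ∧ v.val < a + m
            · have hrv := hrow v hv.1 hv.2
              have hva : ¬ v.val = a := by omega
              obtain ⟨w, hw, hwe⟩ := hg'C v (by omega) hv.2
              rw [hwe]
              have hrw := hrow w (by omega) (by omega)
              by_cases hua : u.val = a
              · rw [hg'B u hua (by omega)]
                exact hz4 w (by omega)
              · obtain ⟨w', hw', hwe'⟩ := hg'C u (by omega) hu.2
                rw [hwe']
                have hrw' := hrow w' (by omega) (by omega)
                exact hgv w' w (by omega)
            · have hvr : ¬(b ≤ (π v).val ∧ (π v).val < b + m) :=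
                fun hh => hv (hrowinv v hh.1 hh.2)
              have hvge : b + m ≤ (π v).val := by omega
              rw [hg'A v hv]
              by_cases hua : u.val = a
              · rw [hg'B u hua (by omega)]
                exact hz4 v (by omega)
              · obtain ⟨w', hw', hwe'⟩ := hg'C u (by omega) hu.2
                rw [hwe']
                have hrw' := hrow w' (by omega) (by omega)
                exact hgv w' v (by omega)
          · have hur : ¬(b ≤ (π u).val ∧ (π u).val < b + m) :=
              fun hh => hu (hrowinv u hh.1 hh.2)
            by_cases hv : a ≤ v.val ∧ v.val < a + m
            · have hrv := hrow v hv.1 hv.2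
              have hub : (π u).val < b := by omega
              rw [hg'A u hu]
              by_cases hva : v.val = a
              · rw [hg'B v hva (by omega)]
                exact hz3 u (by omega)
              · obtain ⟨w, hw, hwe⟩ := hg'C v (by omega) hv.2
                rw [hwe]
                have hrw := hrow w (by omega) (by omega)
                exact hgv u w (by omega)
            · rw [hg'A u hu, hg'A v hv]
              exact hgv u v hpi'
      refine ⟨g', hocc', ?_⟩
      -- psi increases
      have hrowcm : (π cm).val = b + m - 1 := by omega
      have hvalcm : cm.val = a + m - 1 := by omega
      set F : (Fin k → Fin n) → Fin k → ℕ := fun f c =>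
        if SquareInMesh R ((c.val : ℤ) + 1) (((π c).val : ℤ) + 1)
        then (n+1)^(c.val : ℕ) * (σ (f c)).val
        else (n+1)^(k + c.val) * (n - (σ (f c)).val) with hF
      have hpsi : ∀ f : Fin k → Fin n, psi π σ R f = ∑ c : Fin k, F f c := by
        intro f; rfl
      rw [hpsi g, hpsi g']
      have hsplit : ∀ f : Fin k → Fin n, (∑ c : Fin k, F f c) =
          (∑ c ∈ Finset.univ.filter (fun c : Fin k => a ≤ c.val ∧ c.val < a + m), F f c) +
          (∑ c ∈ Finset.univ.filter (fun c : Fin k => ¬(a ≤ c.val ∧ c.val < a + m)), F f c) :=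
        fun f => (Finset.sum_filter_add_sum_filter_not _ _ _).symm
      rw [hsplit g, hsplit g']
      have hrest : (∑ c ∈ Finset.univ.filter (fun c : Fin k => ¬(a ≤ c.val ∧ c.val < a + m)),
          F g' c) = ∑ c ∈ Finset.univ.filter (fun c : Fin k => ¬(a ≤ c.val ∧ c.val < a + m)),
          F g c := by
        refine Finset.sum_congr rfl (fun c hc => ?_)
        have hc' := (Finset.mem_filter.mp hc).2
        rw [hF]
        simp only
        rw [hg'A c hc']
      rw [hrest]
      have hcmmem : cm ∈ Finset.univ.filter (fun c : Fin k => a ≤ c.val ∧ c.val < a + m) :=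
        Finset.mem_filter.mpr ⟨Finset.mem_univ _, by omega, by omega⟩
      refine Nat.add_lt_add_right ?_ _
      rw [← Finset.insert_erase hcmmem, Finset.sum_insert (Finset.notMem_erase _ _),
        Finset.sum_insert (Finset.notMem_erase _ _)]
      -- bound the sum over the erased part for g
      have hEsq : ∀ c ∈ (Finset.univ.filter
          (fun c : Fin k => a ≤ c.val ∧ c.val < a + m)).erase cm,
          SquareInMesh R ((c.val : ℤ) + 1) (((π c).val : ℤ) + 1) := by
        intro c hc
        have hc1 : c ≠ cm := (Finset.mem_erase.mp hc).1
        have hc2 := (Finset.mem_filter.mp (Finset.mem_erase.mp hc).2).2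
        have hcv : c.val < a + m - 1 := by
          rcases Nat.lt_or_ge c.val (a + m - 1) with h | h
          · exact h
          · exact absurd (Fin.ext (by omega : c.val = cm.val)) hc1
        have hrc := hrow c hc2.1 hc2.2
        have := hQlt (c.val - a + 1) (by omega)
        have e1 : ((a : ℤ) + ((c.val - a + 1 : ℕ) : ℤ)) = (c.val : ℤ) + 1 := by omega
        have e2 : ((b : ℤ) + ((c.val - a + 1 : ℕ) : ℤ)) = ((π c).val : ℤ) + 1 := by omega
        rwa [e1, e2] at this
      have hEbound : (∑ c ∈ (Finset.univ.filter
          (fun c : Fin k => a ≤ c.val ∧ c.val < a + m)).erase cm, F g c) + 1 ≤ (n+1)^k := by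
        calc (∑ c ∈ (Finset.univ.filter
              (fun c : Fin k => a ≤ c.val ∧ c.val < a + m)).erase cm, F g c) + 1
            ≤ (∑ c ∈ (Finset.univ.filter
              (fun c : Fin k => a ≤ c.val ∧ c.val < a + m)).erase cm,
                (n+1)^(c.val : ℕ) * n) + 1 := by
              refine Nat.add_le_add_right (Finset.sum_le_sum (fun c hc => ?_)) 1
              rw [hF]
              simp only
              rw [if_pos (hEsq c hc)]
              exact Nat.mul_le_mul_left _ (le_of_lt (σ (g c)).isLt)
          _ ≤ (∑ c : Fin k, (n+1)^(c.val : ℕ) * n) + 1 := by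
              refine Nat.add_le_add_right (Finset.sum_le_sum_of_subset (Finset.subset_univ _)) 1
          _ = (∑ r ∈ Finset.range k, (n+1)^r * n) + 1 := by
              rw [Fin.sum_univ_eq_sum_range (fun r => (n+1)^r * n) k]
          _ = (n+1)^k := geom_aux n k
      -- the main term at cm
      have hsqcm : ¬ SquareInMesh R ((cm.val : ℤ) + 1) (((π cm).val : ℤ) + 1) := by
        have e1 : ((cm.val : ℤ) + 1) = (a : ℤ) + (m : ℕ) := by omega
        have e2 : (((π cm).val : ℤ) + 1) = (b : ℤ) + (m : ℕ) := by omega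
        rw [e1, e2]
        exact hQm
      have hcmlt : (σ (g' cm)).val < (σ (g cm)).val := by
        by_cases hcma : cm.val = a
        · rw [hg'B cm hcma (by omega)]
          exact hz4 cm (by omega)
        · obtain ⟨w, hw, hwe⟩ := hg'C cm (by omega) (by omega)
          rw [hwe]
          have hrw := hrow w (by omega) (by omega)
          exact hgv w cm (by omega)
      have hFcm : F g cm + (n+1)^k ≤ F g' cm := by
        rw [hF]
        simp only
        rw [if_neg hsqcm, if_neg hsqcm]
        have hlt : (σ (g cm)).val < n := (σ (g cm)).isLt
        have h1 : n - (σ (g cm)).val + 1 ≤ n - (σ (g' cm)).val := by omega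
        calc (n+1)^(k + cm.val) * (n - (σ (g cm)).val) + (n+1)^k
            ≤ (n+1)^(k + cm.val) * (n - (σ (g cm)).val) + (n+1)^(k + cm.val) := by
              refine Nat.add_le_add_left (Nat.pow_le_pow_right (by omega) (by omega)) _
          _ = (n+1)^(k + cm.val) * (n - (σ (g cm)).val + 1) := by ring
          _ ≤ (n+1)^(k + cm.val) * (n - (σ (g' cm)).val) := Nat.mul_le_mul_left _ h1
      have hE' : 0 ≤ ∑ c ∈ (Finset.univ.filter
          (fun c : Fin k => a ≤ c.val ∧ c.val < a + m)).erase cm, F g' c := Nat.zero_le _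
      omega
end

section
/- The number of superfluous meshes for the identity permutation 123 ∈ S_3 is 405. -/
/-! ### Auxiliary development for `supMesh_123` -/

section Aux123

lemma of_dec {p : Prop} {inst : Decidable p} (e : @decide p inst = true) : p :=
  of_decide_eq_true e

lemma dec_of {p : Prop} {inst : Decidable p} (hp : p) : @decide p inst = true :=
  decide_eq_true hp

lemma dec_not {p : Prop} {inst : Decidable p} (hp : ¬p) : @decide p inst = false :=
  decide_eq_false hp

/-- measure component -/
def Fm (ng vl : Bool) {n : ℕ} (σ : Equiv.Perm (Fin n)) (x : Fin n) : ℤ :=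
  (if ng then -1 else 1) * (if vl then ((σ x).val : ℤ) else (x.val : ℤ))

lemma Fm_lt_A {ng vl : Bool} (h : vl = ng) {n : ℕ} (σ : Equiv.Perm (Fin n)) {x y : Fin n}
    (hp : x < y) (hv : σ y < σ x) : Fm ng vl σ x < Fm ng vl σ y := by
  subst h; rw [Fin.lt_def] at hp hv; cases vl <;> simp [Fm] <;> omega

lemma Fm_lt_B {ng vl : Bool} (h : vl = !ng) {n : ℕ} (σ : Equiv.Perm (Fin n)) {x y : Fin n}
    (hp : y < x) (hv : σ x < σ y) : Fm ng vl σ x < Fm ng vl σ y := by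
  subst h; rw [Fin.lt_def] at hp hv; cases ng <;> simp [Fm] <;> omega

lemma Fm_lt_C {ng : Bool} (vl : Bool) (h : ng = false) {n : ℕ} (σ : Equiv.Perm (Fin n))
    {x y : Fin n} (hp : x < y) (hv : σ x < σ y) : Fm ng vl σ x < Fm ng vl σ y := by
  subst h; rw [Fin.lt_def] at hp hv; cases vl <;> simp [Fm] <;> omega

lemma Fm_lt_D {ng : Bool} (vl : Bool) (h : ng = true) {n : ℕ} (σ : Equiv.Perm (Fin n))
    {x y : Fin n} (hp : y < x) (hv : σ y < σ x) : Fm ng vl σ x < Fm ng vl σ y := by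
  subst h; rw [Fin.lt_def] at hp hv; cases vl <;> simp [Fm] <;> omega

lemma core (R : Set (Fin 4 × Fin 4)) (na va nb vb nc vc : Bool)
    (H00 : ((0 : Fin 4), (0 : Fin 4)) ∈ R → na = false)
    (H01 : ((0 : Fin 4), (1 : Fin 4)) ∈ R → va = na)
    (H10 : ((1 : Fin 4), (0 : Fin 4)) ∈ R → va = !na)
    (H11 : ((1 : Fin 4), (1 : Fin 4)) ∈ R → nb = false ∨ na = true)
    (H12 : ((1 : Fin 4), (2 : Fin 4)) ∈ R → vb = nb)
    (H21 : ((2 : Fin 4), (1 : Fin 4)) ∈ R → vb = !nb)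
    (H22 : ((2 : Fin 4), (2 : Fin 4)) ∈ R → nc = false ∨ nb = true)
    (H23 : ((2 : Fin 4), (3 : Fin 4)) ∈ R → vc = nc)
    (H32 : ((3 : Fin 4), (2 : Fin 4)) ∈ R → vc = !nc)
    (H33 : ((3 : Fin 4), (3 : Fin 4)) ∈ R → nc = true)
    (Hband : ∀ p : Fin 4 × Fin 4, p ∈ R → p.2.val ≤ p.1.val + 1 ∧ p.1.val ≤ p.2.val + 1)
    {n : ℕ} (σ : Equiv.Perm (Fin n)) (hσ : PatternContains (1 : Equiv.Perm (Fin 3)) σ) :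
    MeshContains (1 : Equiv.Perm (Fin 3)) R σ := by
  classical
  obtain ⟨f, hf, hp⟩ := hσ
  have h1 : f 0 < f 1 := hf (by decide)
  have h2 : f 1 < f 2 := hf (by decide)
  have h3 : σ (f 0) < σ (f 1) := (hp 0 1).mpr (by decide)
  have h4 : σ (f 1) < σ (f 2) := (hp 1 2).mpr (by decide)
  obtain ⟨t, htS, hmin'⟩ := (Finset.univ.filter
      (fun t : Fin n × Fin n × Fin n => t.1 < t.2.1 ∧ t.2.1 < t.2.2 ∧
        σ t.1 < σ t.2.1 ∧ σ t.2.1 < σ t.2.2)).exists_min_image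
      (fun t => Fm na va σ t.1 + Fm nb vb σ t.2.1 + Fm nc vc σ t.2.2)
      ⟨(f 0, f 1, f 2), by simp [h1, h2, h3, h4]⟩
  simp only [Finset.mem_filter, Finset.mem_univ, true_and] at htS
  obtain ⟨A, B, C⟩ := t
  obtain ⟨o1, o2, o3, o4⟩ := htS
  have hmin : ∀ x y z : Fin n, x < y → y < z → σ x < σ y → σ y < σ z →
      Fm na va σ A + Fm nb vb σ B + Fm nc vc σ C ≤
      Fm na va σ x + Fm nb vb σ y + Fm nc vc σ z := by
    intro x y z hx hy hz hw
    exact hmin' (x, y, z) (by simp [hx, hy, hz, hw])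
  refine ⟨![A, B, C], ?_, ?_, ?_⟩
  · intro x y hxy
    fin_cases x <;> fin_cases y <;>
      first
        | exact absurd hxy (by decide)
        | exact o1
        | exact o2
        | exact o1.trans o2
  · intro x y
    fin_cases x <;> fin_cases y <;>
      first
        | exact iff_of_false (lt_irrefl _) (by decide)
        | exact iff_of_true o3 (by decide)
        | exact iff_of_true o4 (by decide)
        | exact iff_of_true (o3.trans o4) (by decide)
        | exact iff_of_false (lt_asymm o3) (by decide)
        | exact iff_of_false (lt_asymm o4) (by decide)
        | exact iff_of_false (lt_asymm (o3.trans o4)) (by decide)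
  · intro p hp'
    fin_cases p
    -- (0,0)
    · rintro ⟨z, hz1, hz2, hz3, hz4⟩
      have p1 : z < A := hz2 0 (by decide)
      have v1 : σ z < σ A := hz4 0 (by decide)
      have hm := hmin z B C (p1.trans o1) o2 (v1.trans o3) o4
      have hF := Fm_lt_C va (H00 hp') σ p1 v1
      linarith
    -- (0,1)
    · rintro ⟨z, hz1, hz2, hz3, hz4⟩
      have p1 : z < A := hz2 0 (by decide)
      have v1 : σ A < σ z := hz3 0 (by decide)
      have v2 : σ z < σ B := hz4 1 (by decide)
      have hm := hmin z B C (p1.trans o1) o2 v2 o4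
      have hF := Fm_lt_A (H01 hp') σ p1 v1
      linarith
    -- (0,2)
    · exact absurd (Hband _ hp') (by decide)
    -- (0,3)
    · exact absurd (Hband _ hp') (by decide)
    -- (1,0)
    · rintro ⟨z, hz1, hz2, hz3, hz4⟩
      have p1 : A < z := hz1 0 (by decide)
      have p2 : z < B := hz2 1 (by decide)
      have v1 : σ z < σ A := hz4 0 (by decide)
      have hm := hmin z B C p2 o2 (v1.trans o3) o4
      have hF := Fm_lt_B (H10 hp') σ p1 v1
      linarith
    -- (1,1)
    · rintro ⟨z, hz1, hz2, hz3, hz4⟩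
      have p1 : A < z := hz1 0 (by decide)
      have p2 : z < B := hz2 1 (by decide)
      have v1 : σ A < σ z := hz3 0 (by decide)
      have v2 : σ z < σ B := hz4 1 (by decide)
      rcases H11 hp' with hb | ha
      · have hm := hmin A z C p1 (p2.trans o2) v1 (v2.trans o4)
        have hF := Fm_lt_C vb hb σ p2 v2
        linarith
      · have hm := hmin z B C p2 o2 v2 o4
        have hF := Fm_lt_D va ha σ p1 v1
        linarith
    -- (1,2)
    · rintro ⟨z, hz1, hz2, hz3, hz4⟩
      have p1 : A < z := hz1 0 (by decide)
      have p2 : z < B := hz2 1 (by decide)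
      have v1 : σ B < σ z := hz3 1 (by decide)
      have v2 : σ z < σ C := hz4 2 (by decide)
      have hm := hmin A z C p1 (p2.trans o2) (o3.trans v1) v2
      have hF := Fm_lt_A (H12 hp') σ p2 v1
      linarith
    -- (1,3)
    · exact absurd (Hband _ hp') (by decide)
    -- (2,0)
    · exact absurd (Hband _ hp') (by decide)
    -- (2,1)
    · rintro ⟨z, hz1, hz2, hz3, hz4⟩
      have p1 : B < z := hz1 1 (by decide)
      have p2 : z < C := hz2 2 (by decide)
      have v1 : σ A < σ z := hz3 0 (by decide)
      have v2 : σ z < σ B := hz4 1 (by decide)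
      have hm := hmin A z C (o1.trans p1) p2 v1 (v2.trans o4)
      have hF := Fm_lt_B (H21 hp') σ p1 v2
      linarith
    -- (2,2)
    · rintro ⟨z, hz1, hz2, hz3, hz4⟩
      have p1 : B < z := hz1 1 (by decide)
      have p2 : z < C := hz2 2 (by decide)
      have v1 : σ B < σ z := hz3 1 (by decide)
      have v2 : σ z < σ C := hz4 2 (by decide)
      rcases H22 hp' with hc | hb
      · have hm := hmin A B z o1 p1 o3 v1
        have hF := Fm_lt_C vc hc σ p2 v2
        linarith
      · have hm := hmin A z C (o1.trans p1) p2 (o3.trans v1) v2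
        have hF := Fm_lt_D vb hb σ p1 v1
        linarith
    -- (2,3)
    · rintro ⟨z, hz1, hz2, hz3, hz4⟩
      have p1 : B < z := hz1 1 (by decide)
      have p2 : z < C := hz2 2 (by decide)
      have v1 : σ C < σ z := hz3 2 (by decide)
      have hm := hmin A B z o1 p1 o3 (o4.trans v1)
      have hF := Fm_lt_A (H23 hp') σ p2 v1
      linarith
    -- (3,0)
    · exact absurd (Hband _ hp') (by decide)
    -- (3,1)
    · exact absurd (Hband _ hp') (by decide)
    -- (3,2)
    · rintro ⟨z, hz1, hz2, hz3, hz4⟩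
      have p1 : C < z := hz1 2 (by decide)
      have v1 : σ B < σ z := hz3 1 (by decide)
      have v2 : σ z < σ C := hz4 2 (by decide)
      have hm := hmin A B z o1 (o2.trans p1) o3 v1
      have hF := Fm_lt_B (H32 hp') σ p1 v2
      linarith
    -- (3,3)
    · rintro ⟨z, hz1, hz2, hz3, hz4⟩
      have p1 : C < z := hz1 2 (by decide)
      have v1 : σ C < σ z := hz3 2 (by decide)
      have hm := hmin A B z o1 (o2.trans p1) o3 (o4.trans v1)
      have hF := Fm_lt_D vc (H33 hp') σ p1 v1
      linarith

lemma one_lt_iff (x y : Fin 3) :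
    ((1 : Equiv.Perm (Fin 3)) x < (1 : Equiv.Perm (Fin 3)) y) ↔ x < y := Iff.rfl

/-- region-of-`q` condition for an occurrence `f` and a point `z` -/
def Reg (σw : Equiv.Perm (Fin 4)) (f : Fin 3 → Fin 4) (q : Fin 4 × Fin 4) : Prop :=
  ∃ z : Fin 4, (∀ c : Fin 3, c.val < q.1.val → f c < z) ∧
    (∀ c : Fin 3, q.1.val ≤ c.val → z < f c) ∧
    (∀ c : Fin 3, c.val < q.2.val → σw (f c) < σw z) ∧
    (∀ c : Fin 3, q.2.val ≤ c.val → σw z < σw (f c))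

instance (σw : Equiv.Perm (Fin 4)) (f : Fin 3 → Fin 4) (q : Fin 4 × Fin 4) :
    Decidable (Reg σw f q) := by unfold Reg; infer_instance

section Kill
variable (R : Set (Fin 4 × Fin 4)) (h : Superfluous (1 : Equiv.Perm (Fin 3)) R)
  (σw : Equiv.Perm (Fin 4)) (f0 : Fin 3 → Fin 4)
  (hm : ∀ x y : Fin 3, x < y → f0 x < f0 y)
  (hp0 : ∀ x y : Fin 3, σw (f0 x) < σw (f0 y) ↔ x < y)

include h hm hp0 in
lemma killSingle (q : Fin 4 × Fin 4) (hq : q ∈ R)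
    (D : ∀ f : Fin 3 → Fin 4, (∀ x y : Fin 3, x < y → f x < f y) →
      (∀ x y : Fin 3, σw (f x) < σw (f y) ↔ x < y) → Reg σw f q) : False := by
  have pc : PatternContains (1 : Equiv.Perm (Fin 3)) σw :=
    ⟨f0, fun x y hxy => hm x y hxy, fun x y => (hp0 x y).trans (one_lt_iff x y).symm⟩
  obtain ⟨f, hmono, hpat, hreg⟩ := (h 4 σw).mpr pc
  obtain ⟨z, z1, z2, z3, z4⟩ := D f (fun x y hxy => hmono hxy)
    (fun x y => (hpat x y).trans (one_lt_iff x y))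
  exact hreg q hq ⟨z, z1, z2, z3, z4⟩

include h hm hp0 in
lemma killPair (q q' : Fin 4 × Fin 4) (hq : q ∈ R) (hq' : q' ∈ R)
    (D : ∀ f : Fin 3 → Fin 4, (∀ x y : Fin 3, x < y → f x < f y) →
      (∀ x y : Fin 3, σw (f x) < σw (f y) ↔ x < y) → Reg σw f q ∨ Reg σw f q') : False := by
  have pc : PatternContains (1 : Equiv.Perm (Fin 3)) σw :=
    ⟨f0, fun x y hxy => hm x y hxy, fun x y => (hp0 x y).trans (one_lt_iff x y).symm⟩
  obtain ⟨f, hmono, hpat, hreg⟩ := (h 4 σw).mpr pc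
  rcases D f (fun x y hxy => hmono hxy) (fun x y => (hpat x y).trans (one_lt_iff x y)) with
    hz | hz
  exacts [hreg q hq hz, hreg q' hq' hz]

include h hm hp0 in
lemma killQuad (q1 q2 q3 q4 : Fin 4 × Fin 4) (h1 : q1 ∈ R) (h2 : q2 ∈ R) (h3 : q3 ∈ R)
    (h4 : q4 ∈ R)
    (D : ∀ f : Fin 3 → Fin 4, (∀ x y : Fin 3, x < y → f x < f y) →
      (∀ x y : Fin 3, σw (f x) < σw (f y) ↔ x < y) →
      Reg σw f q1 ∨ Reg σw f q2 ∨ Reg σw f q3 ∨ Reg σw f q4) : False := by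
  have pc : PatternContains (1 : Equiv.Perm (Fin 3)) σw :=
    ⟨f0, fun x y hxy => hm x y hxy, fun x y => (hp0 x y).trans (one_lt_iff x y).symm⟩
  obtain ⟨f, hmono, hpat, hreg⟩ := (h 4 σw).mpr pc
  rcases D f (fun x y hxy => hmono hxy) (fun x y => (hpat x y).trans (one_lt_iff x y)) with
    hz | hz | hz | hz
  exacts [hreg q1 h1 hz, hreg q2 h2 hz, hreg q3 h3 hz, hreg q4 h4 hz]

end Kill

/-- witness permutation builder -/
def wp (v w : Fin 4 → Fin 4) (h1 : ∀ x, w (v x) = x) (h2 : ∀ x, v (w x) = x) :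
    Equiv.Perm (Fin 4) := ⟨v, w, h1, h2⟩

def w02 : Equiv.Perm (Fin 4) := wp ![2,0,1,3] ![1,2,0,3] (by decide) (by decide)
def w03 : Equiv.Perm (Fin 4) := wp ![3,0,1,2] ![1,2,3,0] (by decide) (by decide)
def w13 : Equiv.Perm (Fin 4) := wp ![0,3,1,2] ![0,2,3,1] (by decide) (by decide)
def w20 : Equiv.Perm (Fin 4) := wp ![1,2,0,3] ![2,0,1,3] (by decide) (by decide)
def w30 : Equiv.Perm (Fin 4) := wp ![1,2,3,0] ![3,0,1,2] (by decide) (by decide)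
def w31 : Equiv.Perm (Fin 4) := wp ![0,2,3,1] ![0,3,1,2] (by decide) (by decide)
def wP1 : Equiv.Perm (Fin 4) := wp ![1,0,2,3] ![1,0,2,3] (by decide) (by decide)
def wP2 : Equiv.Perm (Fin 4) := wp ![0,2,1,3] ![0,2,1,3] (by decide) (by decide)
def wP3 : Equiv.Perm (Fin 4) := wp ![0,1,3,2] ![0,1,3,2] (by decide) (by decide)
def wId : Equiv.Perm (Fin 4) := wp ![0,1,2,3] ![0,1,2,3] (by decide) (by decide)

/-- the characterizing predicate -/
def Qp (R : Set (Fin 4 × Fin 4)) : Prop :=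
  (∀ p ∈ R, p.2.val ≤ p.1.val + 1 ∧ p.1.val ≤ p.2.val + 1) ∧
  ¬(((0:Fin 4),(1:Fin 4)) ∈ R ∧ ((1:Fin 4),(0:Fin 4)) ∈ R) ∧
  ¬(((1:Fin 4),(2:Fin 4)) ∈ R ∧ ((2:Fin 4),(1:Fin 4)) ∈ R) ∧
  ¬(((2:Fin 4),(3:Fin 4)) ∈ R ∧ ((3:Fin 4),(2:Fin 4)) ∈ R) ∧
  ¬(((0:Fin 4),(0:Fin 4)) ∈ R ∧ ((1:Fin 4),(1:Fin 4)) ∈ R ∧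
    ((2:Fin 4),(2:Fin 4)) ∈ R ∧ ((3:Fin 4),(3:Fin 4)) ∈ R)

lemma dirA (R : Set (Fin 4 × Fin 4)) (h : Superfluous (1 : Equiv.Perm (Fin 3)) R) : Qp R := by
  refine ⟨?_, ?_, ?_, ?_, ?_⟩
  · intro p hp
    fin_cases p
    · decide
    · decide
    · exact (killSingle R h w02 ![1,2,3] (by decide) (by decide) _ hp (by decide)).elim
    · exact (killSingle R h w03 ![1,2,3] (by decide) (by decide) _ hp (by decide)).elim
    · decide
    · decide
    · decide
    · exact (killSingle R h w13 ![0,2,3] (by decide) (by decide) _ hp (by decide)).elim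
    · exact (killSingle R h w20 ![0,1,3] (by decide) (by decide) _ hp (by decide)).elim
    · decide
    · decide
    · decide
    · exact (killSingle R h w30 ![0,1,2] (by decide) (by decide) _ hp (by decide)).elim
    · exact (killSingle R h w31 ![0,1,2] (by decide) (by decide) _ hp (by decide)).elim
    · decide
    · decide
  · rintro ⟨ha, hb⟩
    exact killPair R h wP1 ![0,2,3] (by decide) (by decide) _ _ ha hb (by decide)
  · rintro ⟨ha, hb⟩
    exact killPair R h wP2 ![0,1,3] (by decide) (by decide) _ _ ha hb (by decide)
  · rintro ⟨ha, hb⟩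
    exact killPair R h wP3 ![0,1,2] (by decide) (by decide) _ _ ha hb (by decide)
  · rintro ⟨ha, hb, hc, hd⟩
    exact killQuad R h wId ![0,1,2] (by decide) (by decide) _ _ _ _ ha hb hc hd (by decide)

lemma dirB (R : Set (Fin 4 × Fin 4)) (hQ : Qp R) :
    Superfluous (1 : Equiv.Perm (Fin 3)) R := by
  intro n σ
  obtain ⟨hband, hq1, hq2, hq3, hd⟩ := hQ
  constructor
  · rintro ⟨f, hf, hp, -⟩; exact ⟨f, hf, hp⟩
  · intro hσ
    classical
    refine core R
      (decide (((3:Fin 4),(3:Fin 4)) ∈ R ∧ ((2:Fin 4),(2:Fin 4)) ∈ R ∧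
        ((1:Fin 4),(1:Fin 4)) ∈ R))
      ((decide (((3:Fin 4),(3:Fin 4)) ∈ R ∧ ((2:Fin 4),(2:Fin 4)) ∈ R ∧
        ((1:Fin 4),(1:Fin 4)) ∈ R)).xor (decide (((1:Fin 4),(0:Fin 4)) ∈ R)))
      (decide (((3:Fin 4),(3:Fin 4)) ∈ R ∧ ((2:Fin 4),(2:Fin 4)) ∈ R))
      ((decide (((3:Fin 4),(3:Fin 4)) ∈ R ∧ ((2:Fin 4),(2:Fin 4)) ∈ R)).xor
        (decide (((2:Fin 4),(1:Fin 4)) ∈ R)))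
      (decide (((3:Fin 4),(3:Fin 4)) ∈ R))
      ((decide (((3:Fin 4),(3:Fin 4)) ∈ R)).xor (decide (((3:Fin 4),(2:Fin 4)) ∈ R)))
      ?_ ?_ ?_ ?_ ?_ ?_ ?_ ?_ ?_ ?_ hband σ hσ
    · intro h00
      apply dec_not
      rintro ⟨h3, h2, h1⟩
      exact hd ⟨h00, h1, h2, h3⟩
    · intro h01
      have h10 : ((1:Fin 4),(0:Fin 4)) ∉ R := fun hh => hq1 ⟨h01, hh⟩
      rw [dec_not h10, Bool.xor_false]
    · intro h10
      rw [dec_of h10, Bool.xor_true]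
    · intro h11
      by_cases hb : ((3:Fin 4),(3:Fin 4)) ∈ R ∧ ((2:Fin 4),(2:Fin 4)) ∈ R
      · exact Or.inr (dec_of ⟨hb.1, hb.2, h11⟩)
      · exact Or.inl (dec_not hb)
    · intro h12
      have h21 : ((2:Fin 4),(1:Fin 4)) ∉ R := fun hh => hq2 ⟨h12, hh⟩
      rw [dec_not h21, Bool.xor_false]
    · intro h21
      rw [dec_of h21, Bool.xor_true]
    · intro h22
      by_cases h33 : ((3:Fin 4),(3:Fin 4)) ∈ R
      · exact Or.inr (dec_of ⟨h33, h22⟩)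
      · exact Or.inl (dec_not h33)
    · intro h23
      have h32 : ((3:Fin 4),(2:Fin 4)) ∉ R := fun hh => hq3 ⟨h23, hh⟩
      rw [dec_not h32, Bool.xor_false]
    · intro h32
      rw [dec_of h32, Bool.xor_true]
    · intro h33
      exact dec_of h33

def msq : Fin 10 → Fin 4 × Fin 4 :=
  ![(0,0),(0,1),(1,0),(1,1),(1,2),(2,1),(2,2),(2,3),(3,2),(3,3)]

def Cv (v : Fin 10 → Bool) : Prop :=
  ¬(v 1 = true ∧ v 2 = true) ∧ ¬(v 4 = true ∧ v 5 = true) ∧ ¬(v 7 = true ∧ v 8 = true) ∧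
  ¬(v 0 = true ∧ v 3 = true ∧ v 6 = true ∧ v 9 = true)

instance : DecidablePred Cv := fun v => by unfold Cv; infer_instance

noncomputable def EQV : {R : Set (Fin 4 × Fin 4) // Qp R} ≃ {v : Fin 10 → Bool // Cv v} where
  toFun := fun ⟨R, hR⟩ => ⟨fun i => @decide (msq i ∈ R) (Classical.propDecidable _), by
    refine ⟨?_, ?_, ?_, ?_⟩
    · rintro ⟨ha, hb⟩; exact hR.2.1 ⟨of_dec ha, of_dec hb⟩
    · rintro ⟨ha, hb⟩; exact hR.2.2.1 ⟨of_dec ha, of_dec hb⟩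
    · rintro ⟨ha, hb⟩; exact hR.2.2.2.1 ⟨of_dec ha, of_dec hb⟩
    · rintro ⟨ha, hb, hc, hd⟩
      exact hR.2.2.2.2 ⟨of_dec ha, of_dec hb,
        of_dec hc, of_dec hd⟩⟩
  invFun := fun ⟨v, hv⟩ => ⟨{p | ∃ i, v i = true ∧ p = msq i}, by
    have e1 : ∀ i : Fin 10, ((0:Fin 4),(1:Fin 4)) = msq i → i = 1 := by decide
    have e2 : ∀ i : Fin 10, ((1:Fin 4),(0:Fin 4)) = msq i → i = 2 := by decide
    have e4 : ∀ i : Fin 10, ((1:Fin 4),(2:Fin 4)) = msq i → i = 4 := by decide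
    have e5 : ∀ i : Fin 10, ((2:Fin 4),(1:Fin 4)) = msq i → i = 5 := by decide
    have e7 : ∀ i : Fin 10, ((2:Fin 4),(3:Fin 4)) = msq i → i = 7 := by decide
    have e8 : ∀ i : Fin 10, ((3:Fin 4),(2:Fin 4)) = msq i → i = 8 := by decide
    have e0 : ∀ i : Fin 10, ((0:Fin 4),(0:Fin 4)) = msq i → i = 0 := by decide
    have e3 : ∀ i : Fin 10, ((1:Fin 4),(1:Fin 4)) = msq i → i = 3 := by decide
    have e6 : ∀ i : Fin 10, ((2:Fin 4),(2:Fin 4)) = msq i → i = 6 := by decide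
    have e9 : ∀ i : Fin 10, ((3:Fin 4),(3:Fin 4)) = msq i → i = 9 := by decide
    refine ⟨?_, ?_, ?_, ?_, ?_⟩
    · rintro p ⟨i, hi, rfl⟩; fin_cases i <;> decide
    · rintro ⟨⟨i, hi, he⟩, ⟨j, hj, he'⟩⟩
      exact hv.1 ⟨(e1 i he) ▸ hi, (e2 j he') ▸ hj⟩
    · rintro ⟨⟨i, hi, he⟩, ⟨j, hj, he'⟩⟩
      exact hv.2.1 ⟨(e4 i he) ▸ hi, (e5 j he') ▸ hj⟩
    · rintro ⟨⟨i, hi, he⟩, ⟨j, hj, he'⟩⟩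
      exact hv.2.2.1 ⟨(e7 i he) ▸ hi, (e8 j he') ▸ hj⟩
    · rintro ⟨⟨i, hi, he⟩, ⟨j, hj, he'⟩, ⟨l, hl, he''⟩, ⟨o, ho, he'''⟩⟩
      exact hv.2.2.2 ⟨(e0 i he) ▸ hi, (e3 j he') ▸ hj, (e6 l he'') ▸ hl, (e9 o he''') ▸ ho⟩⟩
  left_inv := fun ⟨R, hR⟩ => by
    apply Subtype.ext
    apply Set.ext
    intro p
    simp only [Set.mem_setOf_eq]
    constructor
    · rintro ⟨i, hi, rfl⟩; exact of_dec hi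
    · intro hp
      have hmem : ∃ i : Fin 10, p = msq i := by
        obtain ⟨x, y⟩ := p
        have hb := hR.1 _ hp
        fin_cases x <;> fin_cases y <;>
          first
            | exact absurd hb (by decide)
            | exact ⟨0, rfl⟩ | exact ⟨1, rfl⟩ | exact ⟨2, rfl⟩ | exact ⟨3, rfl⟩
            | exact ⟨4, rfl⟩ | exact ⟨5, rfl⟩ | exact ⟨6, rfl⟩ | exact ⟨7, rfl⟩
            | exact ⟨8, rfl⟩ | exact ⟨9, rfl⟩
      obtain ⟨i, rfl⟩ := hmem
      exact ⟨i, dec_of hp, rfl⟩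
  right_inv := fun ⟨v, hv⟩ => by
    have sqinj : ∀ i j : Fin 10, msq i = msq j → i = j := by decide
    apply Subtype.ext
    funext i
    simp only
    cases hvi : v i with
    | true => exact dec_of ⟨i, hvi, rfl⟩
    | false =>
      apply dec_not
      rintro ⟨j, hj, he⟩
      obtain rfl := sqinj i j he
      rw [hvi] at hj
      exact Bool.noConfusion hj

end Aux123

set_option maxRecDepth 10000 in
/-- The identity permutation `123 ∈ S_3` has exactly 405 superfluous meshes. -/
theorem supMesh_123 : supMesh (1 : Equiv.Perm (Fin 3)) = 405 := by
  have hc : supMesh (1 : Equiv.Perm (Fin 3)) = Nat.card {v : Fin 10 → Bool // Cv v} := by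
    apply Nat.card_congr
    exact (Equiv.subtypeEquivRight fun R => ⟨dirA R, dirB R⟩).trans EQV
  rw [hc, Nat.card_eq_fintype_card]
  decide
end
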